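/- arXiv:2110.14858 — 2 statements merged into one kernel-verified Lean document; each statement's English description precedes it below -/
import Mathlib

section
/- Let Σ = {a, b, c}, let α ∈ {a, c}, and suppose w = xαbybαz and w' = xbαyαbz for some x, y, z ∈ Σ*. Let ᾱ be the letter of Σ other than α and b. Then |w|_{abc} − |w'|_{abc} = |y|_ᾱ. -/
/-- The number of occurrences of `v` as a scattered subword (subsequence) of `w`:
the number of strictly increasing sequences of positions in `w` spelling out `v`. -/
def subwordCount {α : Type*} [DecidableEq α] (w v : List α) : ℕ :=
  w.sublists.count v

/-- The conjugacy class (circular word) `[w]` of `w`: the set of all cyclic shifts of `w`. -/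
def conjClass {α : Type*} [DecidableEq α] (w : List α) : Finset (List α) :=
  insert w ((Finset.range w.length).image w.rotate)

/-- The average subword count of `v` in the circular word `[w]`:
`|[w]|_v = (1/|[w]|) ∑_{u ∈ [w]} |u|_v`. -/
def circCount {α : Type*} [DecidableEq α] (w v : List α) : ℚ :=
  (∑ u ∈ conjClass w, (subwordCount u v : ℚ)) / ((conjClass w).card : ℚ)

/-- The Parikh matrix of the letter `q` of the ordered alphabet `Fin s`:
the identity matrix with an extra `1` in entry `(q, q+1)`. -/
def parikhLetter {s : ℕ} (q : Fin s) : Matrix (Fin (s + 1)) (Fin (s + 1)) ℚ :=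
  1 + Matrix.single q.castSucc q.succ 1

/-- The Parikh matrix mapping over the ordered alphabet `Fin s` (a monoid morphism). -/
def parikhMatrix {s : ℕ} (w : List (Fin s)) : Matrix (Fin (s + 1)) (Fin (s + 1)) ℚ :=
  (w.map parikhLetter).prod

/-- The Parikh matrix of the circular word `[w]`:
`Ψ([w]) = (1/|[w]|) ∑_{u ∈ [w]} Ψ(u)`. -/
def circParikh {s : ℕ} (w : List (Fin s)) : Matrix (Fin (s + 1)) (Fin (s + 1)) ℚ :=
  (((conjClass w).card : ℚ))⁻¹ • ∑ u ∈ conjClass w, parikhMatrix u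

/-- The alternate matrix: `(i,j)` entry is `(-1)^(i+j)` times the `(i,j)` entry of `A`. -/
def altMatrix {n : ℕ} (A : Matrix (Fin n) (Fin n) ℚ) : Matrix (Fin n) (Fin n) ℚ :=
  Matrix.of fun i j => (-1 : ℚ) ^ (i.val + j.val) * A i j

/-- The word `a_i a_{i+1} ⋯ a_j` over the ordered alphabet `Fin s`. -/
def segWord {s : ℕ} (i j : Fin s) : List (Fin s) :=
  (List.range (j.val - i.val + 1)).attach.map fun t =>
    ⟨i.val + t.1, by
      have ht := List.mem_range.mp t.2
      have hi := i.isLt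
      have hj := j.isLt
      omega⟩


section helpers
variable {σ : Type*} [DecidableEq σ]

lemma count_perm_list {l₁ l₂ : List (List σ)} (h : List.Perm l₁ l₂) (v : List σ) :
    l₁.count v = l₂.count v := by
  have hb : (instBEqOfDecidableEq : BEq (List σ)) = List.instBEq :=
    lawful_beq_subsingleton _ _
  have h2 := h.count_eq v
  rw [show (List.count : List σ → List (List σ) → ℕ) = @List.count _ instBEqOfDecidableEq from by
    rw [hb]]
  rw [hb]
  exact h2

lemma swc_nil (w : List σ) : subwordCount w [] = 1 := by
  induction w with
  | nil => simp [subwordCount]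
  | cons a w ih =>
    unfold subwordCount at *
    rw [count_perm_list (List.sublists_cons_perm_append a w), List.count_append, ih]
    have h0 : (List.map (List.cons a) w.sublists).count ([] : List σ) = 0 := by
      rw [List.count_eq_zero]
      intro h
      simp only [List.mem_map] at h
      obtain ⟨s, _, hs⟩ := h
      exact List.cons_ne_nil _ _ hs
    omega

lemma swc_cons (a : σ) (w : List σ) (b : σ) (t : List σ) :
    subwordCount (a :: w) (b :: t) =
      subwordCount w (b :: t) + if b = a then subwordCount w t else 0 := by
  unfold subwordCount
  rw [count_perm_list (List.sublists_cons_perm_append a w), List.count_append]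
  congr 1
  by_cases h : b = a
  · subst h
    rw [if_pos rfl]
    rw [show (List.count : List σ → List (List σ) → ℕ) = @List.count _ instBEqOfDecidableEq from by
      rw [lawful_beq_subsingleton (instBEqOfDecidableEq : BEq (List σ)) List.instBEq]]
    rw [lawful_beq_subsingleton (instBEqOfDecidableEq : BEq (List σ)) List.instBEq]
    exact List.count_map_of_injective (β := List σ) _ _ List.cons_injective _
  · rw [if_neg h, List.count_eq_zero]
    intro hmem
    simp only [List.mem_map] at hmem
    obtain ⟨s, _, hs⟩ := hmem
    exact h (by injection hs.symm)

lemma swc_single (w : List σ) (i : σ) : subwordCount w [i] = w.count i := by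
  induction w with
  | nil => simp [subwordCount]
  | cons a w ih =>
    rw [swc_cons, ih, swc_nil, List.count_cons]
    by_cases h : i = a
    · simp [h]
    · simp [h, Ne.symm h]

lemma swc_append2 (u w : List σ) (i j : σ) :
    subwordCount (u ++ w) [i, j] =
      subwordCount u [i, j] + u.count i * subwordCount w [j] + subwordCount w [i, j] := by
  induction u with
  | nil => simp [subwordCount]
  | cons a u ih =>
    rw [List.cons_append, swc_cons, ih, swc_cons, List.count_cons]
    by_cases h : i = a
    · simp only [h, if_pos rfl, swc_single, List.count_append]
      have : (a == a) = true := by simp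
      simp [this]
      ring
    · have h' : (i == a) = false := by simp [h]
      simp [h, h']
      exact Or.inl (Ne.symm h)

lemma swc_append3 (u w : List σ) (i j k : σ) :
    subwordCount (u ++ w) [i, j, k] =
      subwordCount u [i, j, k] + subwordCount u [i, j] * w.count k
        + u.count i * subwordCount w [j, k] + subwordCount w [i, j, k] := by
  induction u with
  | nil => simp [subwordCount]
  | cons a u ih =>
    rw [List.cons_append, swc_cons, ih, swc_cons, swc_cons, List.count_cons]
    by_cases h : i = a
    · simp only [h, if_pos rfl, swc_single, swc_append2, List.count_append]
      have : (a == a) = true := by simp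
      simp [this]
      ring
    · have h' : (i == a) = false := by simp [h]
      simp [h, h']
      exact Or.inl (Ne.symm h)

end helpers

lemma swc_nil_word (b : Fin 3) (t : List (Fin 3)) :
    subwordCount ([] : List (Fin 3)) (b :: t) = 0 := by
  simp [subwordCount]

/-- Lemma 34: over `{a, b, c} = Fin 3` (with `a = 0`, `b = 1`, `c = 2`), if `α ∈ {a, c}`,
`w = xαbybαz`, `w' = xbαyαbz`, and `ᾱ` is the letter other than `α` and `b`, then
`|w|_{abc} − |w'|_{abc} = |y|_ᾱ`. -/
theorem stmt_17 (α : Fin 3) (hα : α = 0 ∨ α = 2) (x y z : List (Fin 3))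
    (ᾱ : Fin 3) (hᾱ₁ : ᾱ ≠ α) (hᾱ₂ : ᾱ ≠ 1) :
    (subwordCount (x ++ [α, 1] ++ y ++ [1, α] ++ z) [0, 1, 2] : ℤ)
        - (subwordCount (x ++ [1, α] ++ y ++ [α, 1] ++ z) [0, 1, 2] : ℤ) =
      (y.count ᾱ : ℤ) := by
  rcases hα with h | h <;> subst h
  · have h2 : ᾱ = 2 := by fin_cases ᾱ <;> simp_all
    subst h2
    simp only [List.append_assoc, List.cons_append, List.nil_append,
      swc_append3, swc_append2, swc_cons, swc_single, swc_nil, swc_nil_word,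
      List.count_append, List.count_cons, List.count_nil, beq_iff_eq,
      Fin.reduceEq, if_true, if_false, ite_true, ite_false]
    push_cast
    ring
  · have h2 : ᾱ = 0 := by fin_cases ᾱ <;> simp_all
    subst h2
    simp only [List.append_assoc, List.cons_append, List.nil_append,
      swc_append3, swc_append2, swc_cons, swc_single, swc_nil, swc_nil_word,
      List.count_append, List.count_cons, List.count_nil, beq_iff_eq,
      Fin.reduceEq, if_true, if_false, ite_true, ite_false]
    push_cast
    ring
end

section
/- Let Σ = {a < b < c}, let α ∈ {a, c}, and suppose w = xαbybα and w' = xbαyαb for some x, y ∈ Σ*. Let ᾱ be the letter of Σ other than α and b. Then the circular words [w] and [w'] are M-equivalent (i.e., Ψ_Σ([w]) = Ψ_Σ([w'])) if and only if |x|_ᾱ·(|y| + |y|_b + 3) = |y|_ᾱ·(|x| + |x|_b + 3). -/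
def p3 : List (Fin 3) → ℕ
  | [] => 0
  | a :: u => (if a = 0 then u.count 1 else 0) + p3 u

def q3 : List (Fin 3) → ℕ
  | [] => 0
  | a :: u => (if a = 1 then u.count 2 else 0) + q3 u

def t3 : List (Fin 3) → ℕ
  | [] => 0
  | a :: u => (if a = 0 then q3 u else 0) + t3 u

lemma p3_append (u v : List (Fin 3)) :
    p3 (u ++ v) = p3 u + p3 v + u.count 0 * v.count 1 := by
  induction u with
  | nil => simp [p3]
  | cons a u ih =>
    by_cases h : a = 0
    · subst h
      simp only [List.cons_append, p3, if_true, reduceIte, ih, List.count_append,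
        List.count_cons_self, List.append_eq]
      ring
    · simp only [List.cons_append, p3, if_neg h, ih, List.append_eq, zero_add,
        List.count_cons_of_ne h]

lemma q3_append (u v : List (Fin 3)) :
    q3 (u ++ v) = q3 u + q3 v + u.count 1 * v.count 2 := by
  induction u with
  | nil => simp [q3]
  | cons a u ih =>
    by_cases h : a = 1
    · subst h
      simp only [List.cons_append, q3, if_true, reduceIte, ih, List.count_append,
        List.count_cons_self, List.append_eq]
      ring
    · simp only [List.cons_append, q3, if_neg h, ih, List.append_eq, zero_add,
        List.count_cons_of_ne h]

lemma t3_append (u v : List (Fin 3)) :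
    t3 (u ++ v) = t3 u + t3 v + p3 u * v.count 2 + u.count 0 * q3 v := by
  induction u with
  | nil => simp [t3, p3]
  | cons a u ih =>
    by_cases h : a = 0
    · subst h
      simp only [List.cons_append, t3, p3, if_true, reduceIte, ih, q3_append,
        List.count_cons_self, List.append_eq]
      ring
    · simp only [List.cons_append, t3, p3, if_neg h, ih, List.append_eq, zero_add,
        List.count_cons_of_ne h]


def pm2 (d a b c p q t : ℚ) : Matrix (Fin 4) (Fin 4) ℚ :=
  !![d, a, p, t; 0, d, b, q; 0, 0, d, c; 0, 0, 0, d]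

lemma pm2_mul (a b c p q t a' b' c' p' q' t' : ℚ) :
    pm2 1 a b c p q t * pm2 1 a' b' c' p' q' t' =
      pm2 1 (a + a') (b + b') (c + c') (p + p' + a * b') (q + q' + b * c')
        (t + t' + p * c' + a * q') := by
  ext i j
  fin_cases i <;> fin_cases j <;>
    simp [pm2, Matrix.mul_apply, Fin.sum_univ_four, Matrix.vecHead, Matrix.vecTail] <;> first | ring | decide

lemma pm2_one : (1 : Matrix (Fin 4) (Fin 4) ℚ) = pm2 1 0 0 0 0 0 0 := by
  ext i j
  fin_cases i <;> fin_cases j <;>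
    simp [pm2, Matrix.one_apply, Matrix.vecHead, Matrix.vecTail, Fin.ext_iff] <;> first | rfl | decide | (split_ifs <;> simp_all <;> omega)

lemma parikhLetter_zero : parikhLetter (0 : Fin 3) = pm2 1 1 0 0 0 0 0 := by
  ext i j
  fin_cases i <;> fin_cases j <;>
    simp [parikhLetter, pm2, Matrix.single, Matrix.one_apply,
      Matrix.vecHead, Matrix.vecTail, Fin.ext_iff] <;> first | rfl | decide | (split_ifs <;> simp_all <;> omega)

lemma parikhLetter_one : parikhLetter (1 : Fin 3) = pm2 1 0 1 0 0 0 0 := by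
  ext i j
  fin_cases i <;> fin_cases j <;>
    simp [parikhLetter, pm2, Matrix.single, Matrix.one_apply,
      Matrix.vecHead, Matrix.vecTail, Fin.ext_iff] <;> first | rfl | decide | (split_ifs <;> simp_all <;> omega)

lemma parikhLetter_two : parikhLetter (2 : Fin 3) = pm2 1 0 0 1 0 0 0 := by
  ext i j
  fin_cases i <;> fin_cases j <;>
    simp [parikhLetter, pm2, Matrix.single, Matrix.one_apply,
      Matrix.vecHead, Matrix.vecTail, Fin.ext_iff] <;> first | rfl | decide | (split_ifs <;> simp_all <;> omega)

lemma parikhMatrix_nil : parikhMatrix ([] : List (Fin 3)) = pm2 1 0 0 0 0 0 0 := by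
  rw [parikhMatrix, List.map_nil, List.prod_nil, pm2_one]

lemma parikhMatrix_cons (a : Fin 3) (u : List (Fin 3)) :
    parikhMatrix (a :: u) = parikhLetter a * parikhMatrix u := by
  rw [parikhMatrix, List.map_cons, List.prod_cons, parikhMatrix]

lemma fin3_cases (a : Fin 3) : a = 0 ∨ a = 1 ∨ a = 2 := by omega

lemma parikhLetter_eq (a : Fin 3) : parikhLetter a =
    pm2 1 (if a = 0 then 1 else 0) (if a = 1 then 1 else 0) (if a = 2 then 1 else 0)
      0 0 0 := by
  rcases fin3_cases a with rfl | rfl | rfl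
  · simpa using parikhLetter_zero
  · simpa using parikhLetter_one
  · simpa using parikhLetter_two

lemma parikh_eq (u : List (Fin 3)) :
    parikhMatrix u = pm2 1 (u.count 0) (u.count 1) (u.count 2)
      (p3 u) (q3 u) (t3 u) := by
  induction u with
  | nil => simp [parikhMatrix_nil, p3, q3, t3]
  | cons a u ih =>
    rw [parikhMatrix_cons, ih, parikhLetter_eq, pm2_mul]
    rcases fin3_cases a with rfl | rfl | rfl <;>
      · simp [p3, q3, t3, List.count_cons]
        push_cast
        try ring_nf
        try norm_num


lemma conjClass_eq_image {α : Type*} [DecidableEq α] (w : List α) (hw : w ≠ []) :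
    conjClass w = (Finset.range w.length).image w.rotate := by
  rw [conjClass, Finset.insert_eq_self]
  exact Finset.mem_image.mpr ⟨0, Finset.mem_range.mpr (List.length_pos_iff.mpr hw), w.rotate_zero⟩

lemma mod_round (L r a : ℕ) (hr : r < L) (ha : a ≤ L) :
    ((r + a) % L + (L - a)) % L = r := by
  rw [Nat.mod_add_mod]
  have h : r + a + (L - a) = r + L := by omega
  rw [h, Nat.add_mod_right, Nat.mod_eq_of_lt hr]

lemma fiber_card_const {α : Type*} [DecidableEq α] (w : List α) (hw : w ≠ [])
    {u : List α} (hu : u ∈ (Finset.range w.length).image w.rotate) :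
    ((Finset.range w.length).filter (fun r => w.rotate r = u)).card =
      ((Finset.range w.length).filter (fun r => w.rotate r = w)).card := by
  obtain ⟨s, hs, rfl⟩ := Finset.mem_image.mp hu
  rw [Finset.mem_range] at hs
  have hn : 0 < w.length := List.length_pos_iff.mpr hw
  apply Finset.card_bij' (i := fun r _ => (r + (w.length - s)) % w.length)
    (j := fun r _ => (r + s) % w.length)
  · intro r hr
    simp only [Finset.mem_filter, Finset.mem_range] at hr ⊢
    refine ⟨Nat.mod_lt _ hn, ?_⟩
    rw [List.rotate_mod, ← List.rotate_rotate, hr.2, List.rotate_rotate,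
      Nat.add_sub_cancel' (le_of_lt hs), List.rotate_length]
  · intro r hr
    simp only [Finset.mem_filter, Finset.mem_range] at hr ⊢
    refine ⟨Nat.mod_lt _ hn, ?_⟩
    rw [List.rotate_mod, ← List.rotate_rotate, hr.2]
  · intro r hr
    simp only [Finset.mem_filter, Finset.mem_range] at hr
    have h2 : w.length - (w.length - s) = s := by omega
    calc ((r + (w.length - s)) % w.length + s) % w.length
        = ((r + (w.length - s)) % w.length + (w.length - (w.length - s))) % w.length := by
          rw [h2]
      _ = r := mod_round _ _ _ hr.1 (by omega)
  · intro r hr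
    simp only [Finset.mem_filter, Finset.mem_range] at hr
    exact mod_round _ _ _ hr.1 (le_of_lt hs)

lemma circParikh_eq_rot {s : ℕ} (w : List (Fin s)) (hw : w ≠ []) :
    circParikh w =
      ((w.length : ℚ))⁻¹ • ∑ r ∈ Finset.range w.length, parikhMatrix (w.rotate r) := by
  classical
  have hn : 0 < w.length := List.length_pos_iff.mpr hw
  set n := w.length
  set h := ((Finset.range n).filter (fun r => w.rotate r = w)).card with hh
  have hhpos : 0 < h := by
    apply Finset.card_pos.mpr
    exact ⟨0, Finset.mem_filter.mpr ⟨Finset.mem_range.mpr hn, w.rotate_zero⟩⟩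
  have hsum : ∑ r ∈ Finset.range n, parikhMatrix (w.rotate r) =
      ∑ u ∈ (Finset.range n).image w.rotate, (h : ℚ) • parikhMatrix u := by
    rw [Finset.sum_comp parikhMatrix w.rotate]
    refine Finset.sum_congr rfl fun u hu => ?_
    rw [fiber_card_const w hw hu, ← hh, ← Nat.cast_smul_eq_nsmul ℚ]
  have hcard : n = (conjClass w).card * h := by
    conv_lhs => rw [show n = (Finset.range n).card from (Finset.card_range n).symm]
    rw [Finset.card_eq_sum_card_fiberwise (t := (Finset.range n).image w.rotate)
      (fun r hr => Finset.mem_image_of_mem _ hr)]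
    rw [conjClass_eq_image w hw, Finset.card_eq_sum_ones ((Finset.range n).image w.rotate),
      Finset.sum_mul]
    exact Finset.sum_congr rfl fun u hu => by
      rw [one_mul, fiber_card_const w hw hu]
  have hcpos : 0 < (conjClass w).card := by
    refine Finset.card_pos.mpr ⟨w, ?_⟩
    rw [conjClass]
    exact Finset.mem_insert_self _ _
  rw [circParikh, hsum, conjClass_eq_image w hw, ← Finset.smul_sum, smul_smul]
  congr 1
  have hne : ((conjClass w).card : ℚ) ≠ 0 := by exact_mod_cast hcpos.ne'
  have hhne : (h : ℚ) ≠ 0 := by exact_mod_cast hhpos.ne'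
  have hn' : ((n : ℕ) : ℚ) = ((conjClass w).card : ℚ) * (h : ℚ) := by
    rw [hcard]; push_cast; ring
  rw [hn', mul_inv, mul_assoc, inv_mul_cancel₀ hhne, mul_one]
  rw [← conjClass_eq_image w hw]

lemma rot_concat {γ : Type*} (u v : List γ) : (u ++ v).rotate u.length = v ++ u := by
  rw [List.rotate_eq_drop_append_take (by simp), List.drop_left, List.take_left]

lemma rot_small {γ : Type*} (u v : List γ) {r : ℕ} (hr : r ≤ u.length) :
    (u ++ v).rotate r = u.drop r ++ v ++ u.take r := by
  rw [List.rotate_eq_drop_append_take (by simp; omega),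
    List.drop_append_of_le_length hr, List.take_append_of_le_length hr]

lemma rot_mid {γ : Type*} (u v : List γ) {j : ℕ} (hj : j ≤ v.length) :
    (u ++ v).rotate (u.length + j) = v.drop j ++ (u ++ v.take j) := by
  rw [List.rotate_eq_drop_append_take (by simp; omega), List.drop_append,
    List.take_append]
  simp
  rw [List.drop_eq_nil_of_le (by omega), List.take_of_length_le (by omega)]
  simp

section regions

variable (α ᾱ : Fin 3) (hd : (α = 0 ∧ ᾱ = 2) ∨ (α = 2 ∧ ᾱ = 0)) (x y : List (Fin 3))
include hd

-- region 1 : r ≤ x.length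
lemma reg1 {r : ℕ} (hr : r ≤ x.length) :
    p3 ((x ++ [α, 1] ++ y ++ [1, α]).rotate r) = p3 ((x ++ [1, α] ++ y ++ [α, 1]).rotate r) ∧
    q3 ((x ++ [α, 1] ++ y ++ [1, α]).rotate r) = q3 ((x ++ [1, α] ++ y ++ [α, 1]).rotate r) ∧
    t3 ((x ++ [α, 1] ++ y ++ [1, α]).rotate r) =
      t3 ((x ++ [1, α] ++ y ++ [α, 1]).rotate r) + y.count ᾱ := by
  have h1 : x ++ [α, 1] ++ y ++ [1, α] = x ++ ([α, 1] ++ y ++ [1, α]) := by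
    simp [List.append_assoc]
  have h2 : x ++ [1, α] ++ y ++ [α, 1] = x ++ ([1, α] ++ y ++ [α, 1]) := by
    simp [List.append_assoc]
  rw [h1, h2, rot_small _ _ hr, rot_small _ _ hr]
  rcases hd with ⟨rfl, rfl⟩ | ⟨rfl, rfl⟩ <;>
    refine ⟨?_, ?_, ?_⟩ <;>
    · simp [p3_append, q3_append, t3_append, List.count_append, p3, q3, t3,
        List.count_cons, List.count_nil]
      try ring

-- region 3 : r = (x ++ [α,1]).length + j, j ≤ y.length
lemma reg3 {j : ℕ} (hj : j ≤ y.length) :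
    p3 ((x ++ [α, 1] ++ y ++ [1, α]).rotate ((x ++ [α, 1]).length + j)) =
      p3 ((x ++ [1, α] ++ y ++ [α, 1]).rotate ((x ++ [1, α]).length + j)) ∧
    q3 ((x ++ [α, 1] ++ y ++ [1, α]).rotate ((x ++ [α, 1]).length + j)) =
      q3 ((x ++ [1, α] ++ y ++ [α, 1]).rotate ((x ++ [1, α]).length + j)) ∧
    t3 ((x ++ [1, α] ++ y ++ [α, 1]).rotate ((x ++ [1, α]).length + j)) =
      t3 ((x ++ [α, 1] ++ y ++ [1, α]).rotate ((x ++ [α, 1]).length + j)) + x.count ᾱ := by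
  have h1 : x ++ [α, 1] ++ y ++ [1, α] = (x ++ [α, 1]) ++ (y ++ [1, α]) := by
    simp [List.append_assoc]
  have h2 : x ++ [1, α] ++ y ++ [α, 1] = (x ++ [1, α]) ++ (y ++ [α, 1]) := by
    simp [List.append_assoc]
  have hj1 : j ≤ (y ++ [1, α]).length := by simp; omega
  have hj2 : j ≤ (y ++ [α, 1]).length := by simp; omega
  rw [h1, h2, rot_mid _ _ hj1, rot_mid _ _ hj2,
    List.drop_append_of_le_length hj, List.drop_append_of_le_length hj,
    List.take_append_of_le_length hj, List.take_append_of_le_length hj]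
  rcases hd with ⟨rfl, rfl⟩ | ⟨rfl, rfl⟩ <;>
    refine ⟨?_, ?_, ?_⟩ <;>
    · simp [p3_append, q3_append, t3_append, List.count_append, p3, q3, t3,
        List.count_cons, List.count_nil]
      try ring

omit hd in
-- special rotations r = x.length + 1 and r = (x ++ [α,1] ++ y ++ [1]).length
lemma rot_spec1 :
    (x ++ [α, 1] ++ y ++ [1, α]).rotate ((x ++ [α]).length) =
      ([1] ++ (y ++ [1, α])) ++ (x ++ [α]) := by
  have h1 : x ++ [α, 1] ++ y ++ [1, α] = (x ++ [α]) ++ ([1] ++ (y ++ [1, α])) := by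
    simp [List.append_assoc]
  rw [h1, rot_concat]

omit hd in
lemma rot_spec2 :
    (x ++ [α, 1] ++ y ++ [1, α]).rotate ((x ++ [α, 1] ++ y ++ [1]).length) =
      [α] ++ (x ++ [α, 1] ++ y ++ [1]) := by
  have h1 : x ++ [α, 1] ++ y ++ [1, α] = (x ++ [α, 1] ++ y ++ [1]) ++ [α] := by
    simp [List.append_assoc]
  conv_lhs => rw [h1]
  rw [rot_concat]

lemma spec (f1 f2 g1 g2 : List (Fin 3))
    (e1 : f1 = ([1] ++ (y ++ [1, α])) ++ (x ++ [α]))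
    (e2 : f2 = [α] ++ (x ++ [α, 1] ++ y ++ [1]))
    (e3 : g1 = ([α] ++ (y ++ [α, 1])) ++ (x ++ [1]))
    (e4 : g2 = [1] ++ (x ++ [1, α] ++ y ++ [α])) :
    p3 f1 + p3 f2 = p3 g1 + p3 g2 ∧
    q3 f1 + q3 f2 = q3 g1 + q3 g2 ∧
    t3 f1 + t3 f2 + x.count ᾱ * (y.count 1 + 2) =
      t3 g1 + t3 g2 + y.count ᾱ * (x.count 1 + 2) := by
  subst e1 e2 e3 e4
  rcases hd with ⟨rfl, rfl⟩ | ⟨rfl, rfl⟩ <;>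
    refine ⟨?_, ?_, ?_⟩ <;>
    · simp [p3_append, q3_append, t3_append, List.count_append, p3, q3, t3,
        List.count_cons, List.count_nil]
      try ring

end regions

lemma pm2_add (d a b c p q t d' a' b' c' p' q' t' : ℚ) :
    pm2 d a b c p q t + pm2 d' a' b' c' p' q' t' =
      pm2 (d + d') (a + a') (b + b') (c + c') (p + p') (q + q') (t + t') := by
  ext i j
  fin_cases i <;> fin_cases j <;>
    simp [pm2, Matrix.vecHead, Matrix.vecTail]

lemma pm2_zero : (0 : Matrix (Fin 4) (Fin 4) ℚ) = pm2 0 0 0 0 0 0 0 := by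
  ext i j
  fin_cases i <;> fin_cases j <;> simp [pm2, Matrix.vecHead, Matrix.vecTail]

lemma sum_pm2 (s : Finset ℕ) (a b c p q t : ℕ → ℚ) :
    ∑ r ∈ s, pm2 1 (a r) (b r) (c r) (p r) (q r) (t r) =
      pm2 s.card (∑ r ∈ s, a r) (∑ r ∈ s, b r) (∑ r ∈ s, c r)
        (∑ r ∈ s, p r) (∑ r ∈ s, q r) (∑ r ∈ s, t r) := by
  classical
  induction s using Finset.induction_on with
  | empty => simp [← pm2_zero]
  | insert _ _ hns ih =>
    simp only [Finset.sum_insert hns, ih, pm2_add, Finset.card_insert_of_notMem hns]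
    congr 1 <;> push_cast <;> ring

lemma pm2_eq_iff (d a b c p q t d' a' b' c' p' q' t' : ℚ) :
    pm2 d a b c p q t = pm2 d' a' b' c' p' q' t' ↔
      d = d' ∧ a = a' ∧ b = b' ∧ c = c' ∧ p = p' ∧ q = q' ∧ t = t' := by
  constructor
  · intro h
    have h00 := congrFun (congrFun h 0) 0
    have h01 := congrFun (congrFun h 0) 1
    have h12 := congrFun (congrFun h 1) 2
    have h23 := congrFun (congrFun h 2) 3
    have h02 := congrFun (congrFun h 0) 2
    have h13 := congrFun (congrFun h 1) 3
    have h03 := congrFun (congrFun h 0) 3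
    simp [pm2] at h00 h01 h12 h23 h02 h13 h03
    exact ⟨h00, h01, h12, h23, h02, h13, h03⟩
  · rintro ⟨rfl, rfl, rfl, rfl, rfl, rfl, rfl⟩; rfl

lemma sum_split {M : Type*} [AddCommMonoid M] (A B : ℕ) (f : ℕ → M) :
    ∑ r ∈ Finset.range (A + B + 4), f r =
      (∑ r ∈ Finset.range (A + 1), f r) + f (A + 1) +
        (∑ j ∈ Finset.range (B + 1), f (A + 2 + j)) + f (A + B + 3) := by
  rw [show A + B + 4 = (A + 1 + 1 + (B + 1)) + 1 by ring, Finset.sum_range_succ,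
    Finset.sum_range_add, Finset.sum_range_succ]
  rw [show A + 1 + 1 + (B + 1) = A + B + 3 by ring]

lemma rot_spec1' (a b : Fin 3) (x y : List (Fin 3)) :
    (x ++ [a, b] ++ y ++ [b, a]).rotate ((x ++ [a]).length) =
      ([b] ++ (y ++ [b, a])) ++ (x ++ [a]) := by
  have h1 : x ++ [a, b] ++ y ++ [b, a] = (x ++ [a]) ++ ([b] ++ (y ++ [b, a])) := by
    simp [List.append_assoc]
  rw [h1, rot_concat]

lemma rot_spec2' (a b : Fin 3) (x y : List (Fin 3)) :
    (x ++ [a, b] ++ y ++ [b, a]).rotate ((x ++ [a, b] ++ y ++ [b]).length) =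
      [a] ++ (x ++ [a, b] ++ y ++ [b]) := by
  have h1 : x ++ [a, b] ++ y ++ [b, a] = (x ++ [a, b] ++ y ++ [b]) ++ [a] := by
    simp [List.append_assoc]
  conv_lhs => rw [h1]
  rw [rot_concat]

section assembly

variable (α ᾱ : Fin 3) (hd : (α = 0 ∧ ᾱ = 2) ∨ (α = 2 ∧ ᾱ = 0)) (x y : List (Fin 3))
include hd

lemma espec :
    p3 ((x ++ [α, 1] ++ y ++ [1, α]).rotate (x.length + 1)) +
        p3 ((x ++ [α, 1] ++ y ++ [1, α]).rotate (x.length + y.length + 3)) =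
      p3 ((x ++ [1, α] ++ y ++ [α, 1]).rotate (x.length + 1)) +
        p3 ((x ++ [1, α] ++ y ++ [α, 1]).rotate (x.length + y.length + 3)) ∧
    q3 ((x ++ [α, 1] ++ y ++ [1, α]).rotate (x.length + 1)) +
        q3 ((x ++ [α, 1] ++ y ++ [1, α]).rotate (x.length + y.length + 3)) =
      q3 ((x ++ [1, α] ++ y ++ [α, 1]).rotate (x.length + 1)) +
        q3 ((x ++ [1, α] ++ y ++ [α, 1]).rotate (x.length + y.length + 3)) ∧
    t3 ((x ++ [α, 1] ++ y ++ [1, α]).rotate (x.length + 1)) +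
        t3 ((x ++ [α, 1] ++ y ++ [1, α]).rotate (x.length + y.length + 3)) +
        x.count ᾱ * (y.count 1 + 2) =
      t3 ((x ++ [1, α] ++ y ++ [α, 1]).rotate (x.length + 1)) +
        t3 ((x ++ [1, α] ++ y ++ [α, 1]).rotate (x.length + y.length + 3)) +
        y.count ᾱ * (x.count 1 + 2) := by
  apply spec α ᾱ hd x y
  · rw [show x.length + 1 = (x ++ [α] : List (Fin 3)).length from by simp]
    exact rot_spec1' α 1 x y
  · rw [show x.length + y.length + 3 = (x ++ [α, 1] ++ y ++ [1] : List (Fin 3)).length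
      from by simp; omega]
    exact rot_spec2' α 1 x y
  · rw [show x.length + 1 = (x ++ [1] : List (Fin 3)).length from by simp]
    exact rot_spec1' 1 α x y
  · rw [show x.length + y.length + 3 = (x ++ [1, α] ++ y ++ [α] : List (Fin 3)).length
      from by simp; omega]
    exact rot_spec2' 1 α x y

lemma ereg3 {j : ℕ} (hj : j ≤ y.length) :
    p3 ((x ++ [α, 1] ++ y ++ [1, α]).rotate (x.length + 2 + j)) =
      p3 ((x ++ [1, α] ++ y ++ [α, 1]).rotate (x.length + 2 + j)) ∧
    q3 ((x ++ [α, 1] ++ y ++ [1, α]).rotate (x.length + 2 + j)) =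
      q3 ((x ++ [1, α] ++ y ++ [α, 1]).rotate (x.length + 2 + j)) ∧
    t3 ((x ++ [1, α] ++ y ++ [α, 1]).rotate (x.length + 2 + j)) =
      t3 ((x ++ [α, 1] ++ y ++ [1, α]).rotate (x.length + 2 + j)) + x.count ᾱ := by
  have h := reg3 α ᾱ hd x y hj
  rw [show (x ++ [α, 1] : List (Fin 3)).length = x.length + 2 from by simp,
    show (x ++ [1, α] : List (Fin 3)).length = x.length + 2 from by simp] at h
  exact h

lemma sum_p_eq :
    ∑ r ∈ Finset.range (x.length + y.length + 4),
        (p3 ((x ++ [α, 1] ++ y ++ [1, α]).rotate r) : ℚ) =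
      ∑ r ∈ Finset.range (x.length + y.length + 4),
        (p3 ((x ++ [1, α] ++ y ++ [α, 1]).rotate r) : ℚ) := by
  rw [sum_split x.length y.length, sum_split x.length y.length]
  have e1 : ∑ r ∈ Finset.range (x.length + 1),
      (p3 ((x ++ [α, 1] ++ y ++ [1, α]).rotate r) : ℚ) =
      ∑ r ∈ Finset.range (x.length + 1),
      (p3 ((x ++ [1, α] ++ y ++ [α, 1]).rotate r) : ℚ) :=
    Finset.sum_congr rfl fun r hr => by
      exact_mod_cast (reg1 α ᾱ hd x y (by have := Finset.mem_range.mp hr; omega)).1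
  have e3 : ∑ j ∈ Finset.range (y.length + 1),
      (p3 ((x ++ [α, 1] ++ y ++ [1, α]).rotate (x.length + 2 + j)) : ℚ) =
      ∑ j ∈ Finset.range (y.length + 1),
      (p3 ((x ++ [1, α] ++ y ++ [α, 1]).rotate (x.length + 2 + j)) : ℚ) :=
    Finset.sum_congr rfl fun j hj => by
      exact_mod_cast (ereg3 α ᾱ hd x y (by have := Finset.mem_range.mp hj; omega)).1
  have e2 := (espec α ᾱ hd x y).1
  have e2' : (p3 ((x ++ [α, 1] ++ y ++ [1, α]).rotate (x.length + 1)) : ℚ) +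
      p3 ((x ++ [α, 1] ++ y ++ [1, α]).rotate (x.length + y.length + 3)) =
      (p3 ((x ++ [1, α] ++ y ++ [α, 1]).rotate (x.length + 1)) : ℚ) +
      p3 ((x ++ [1, α] ++ y ++ [α, 1]).rotate (x.length + y.length + 3)) := by
    exact_mod_cast e2
  linarith [e1, e3, e2']

lemma sum_q_eq :
    ∑ r ∈ Finset.range (x.length + y.length + 4),
        (q3 ((x ++ [α, 1] ++ y ++ [1, α]).rotate r) : ℚ) =
      ∑ r ∈ Finset.range (x.length + y.length + 4),
        (q3 ((x ++ [1, α] ++ y ++ [α, 1]).rotate r) : ℚ) := by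
  rw [sum_split x.length y.length, sum_split x.length y.length]
  have e1 : ∑ r ∈ Finset.range (x.length + 1),
      (q3 ((x ++ [α, 1] ++ y ++ [1, α]).rotate r) : ℚ) =
      ∑ r ∈ Finset.range (x.length + 1),
      (q3 ((x ++ [1, α] ++ y ++ [α, 1]).rotate r) : ℚ) :=
    Finset.sum_congr rfl fun r hr => by
      exact_mod_cast (reg1 α ᾱ hd x y (by have := Finset.mem_range.mp hr; omega)).2.1
  have e3 : ∑ j ∈ Finset.range (y.length + 1),
      (q3 ((x ++ [α, 1] ++ y ++ [1, α]).rotate (x.length + 2 + j)) : ℚ) =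
      ∑ j ∈ Finset.range (y.length + 1),
      (q3 ((x ++ [1, α] ++ y ++ [α, 1]).rotate (x.length + 2 + j)) : ℚ) :=
    Finset.sum_congr rfl fun j hj => by
      exact_mod_cast (ereg3 α ᾱ hd x y (by have := Finset.mem_range.mp hj; omega)).2.1
  have e2 := (espec α ᾱ hd x y).2.1
  have e2' : (q3 ((x ++ [α, 1] ++ y ++ [1, α]).rotate (x.length + 1)) : ℚ) +
      q3 ((x ++ [α, 1] ++ y ++ [1, α]).rotate (x.length + y.length + 3)) =
      (q3 ((x ++ [1, α] ++ y ++ [α, 1]).rotate (x.length + 1)) : ℚ) +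
      q3 ((x ++ [1, α] ++ y ++ [α, 1]).rotate (x.length + y.length + 3)) := by
    exact_mod_cast e2
  linarith [e1, e3, e2']

lemma sum_t_rel :
    ∑ r ∈ Finset.range (x.length + y.length + 4),
        (t3 ((x ++ [α, 1] ++ y ++ [1, α]).rotate r) : ℚ) +
      (x.count ᾱ : ℚ) * ((y.length : ℚ) + (y.count 1 : ℚ) + 3) =
      ∑ r ∈ Finset.range (x.length + y.length + 4),
        (t3 ((x ++ [1, α] ++ y ++ [α, 1]).rotate r) : ℚ) +
      (y.count ᾱ : ℚ) * ((x.length : ℚ) + (x.count 1 : ℚ) + 3) := by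
  rw [sum_split x.length y.length, sum_split x.length y.length]
  have e1 : ∑ r ∈ Finset.range (x.length + 1),
      (t3 ((x ++ [α, 1] ++ y ++ [1, α]).rotate r) : ℚ) =
      ∑ r ∈ Finset.range (x.length + 1),
      (t3 ((x ++ [1, α] ++ y ++ [α, 1]).rotate r) : ℚ) +
      ((x.length : ℚ) + 1) * (y.count ᾱ : ℚ) := by
    have hcg : ∀ r ∈ Finset.range (x.length + 1),
        (t3 ((x ++ [α, 1] ++ y ++ [1, α]).rotate r) : ℚ) =
        (t3 ((x ++ [1, α] ++ y ++ [α, 1]).rotate r) : ℚ) + (y.count ᾱ : ℚ) :=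
      fun r hr => by
        exact_mod_cast (reg1 α ᾱ hd x y (by have := Finset.mem_range.mp hr; omega)).2.2
    rw [Finset.sum_congr rfl hcg, Finset.sum_add_distrib, Finset.sum_const,
      Finset.card_range, nsmul_eq_mul]
    push_cast
    ring
  have e3 : ∑ j ∈ Finset.range (y.length + 1),
      (t3 ((x ++ [1, α] ++ y ++ [α, 1]).rotate (x.length + 2 + j)) : ℚ) =
      ∑ j ∈ Finset.range (y.length + 1),
      (t3 ((x ++ [α, 1] ++ y ++ [1, α]).rotate (x.length + 2 + j)) : ℚ) +
      ((y.length : ℚ) + 1) * (x.count ᾱ : ℚ) := by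
    have hcg : ∀ j ∈ Finset.range (y.length + 1),
        (t3 ((x ++ [1, α] ++ y ++ [α, 1]).rotate (x.length + 2 + j)) : ℚ) =
        (t3 ((x ++ [α, 1] ++ y ++ [1, α]).rotate (x.length + 2 + j)) : ℚ) + (x.count ᾱ : ℚ) :=
      fun j hj => by
        exact_mod_cast (ereg3 α ᾱ hd x y (by have := Finset.mem_range.mp hj; omega)).2.2
    rw [Finset.sum_congr rfl hcg, Finset.sum_add_distrib, Finset.sum_const,
      Finset.card_range, nsmul_eq_mul]
    push_cast
    ring
  have e2 := (espec α ᾱ hd x y).2.2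
  have e2' : (t3 ((x ++ [α, 1] ++ y ++ [1, α]).rotate (x.length + 1)) : ℚ) +
      (t3 ((x ++ [α, 1] ++ y ++ [1, α]).rotate (x.length + y.length + 3)) : ℚ) +
      (x.count ᾱ : ℚ) * ((y.count 1 : ℚ) + 2) =
      (t3 ((x ++ [1, α] ++ y ++ [α, 1]).rotate (x.length + 1)) : ℚ) +
      (t3 ((x ++ [1, α] ++ y ++ [α, 1]).rotate (x.length + y.length + 3)) : ℚ) +
      (y.count ᾱ : ℚ) * ((x.count 1 : ℚ) + 2) := by
    exact_mod_cast e2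
  linarith [e1, e3, e2']

end assembly

/-- Theorem 35: over `{a < b < c} = Fin 3` (with `a = 0`, `b = 1`, `c = 2`), if `α ∈ {a, c}`,
`w = xαbybα`, `w' = xbαyαb`, and `ᾱ` is the letter other than `α` and `b`, then
`[w] ≡_M [w']` iff `|x|_ᾱ(|y| + |y|_b + 3) = |y|_ᾱ(|x| + |x|_b + 3)`. -/
theorem stmt_18 (α : Fin 3) (hα : α = 0 ∨ α = 2) (x y : List (Fin 3))
    (ᾱ : Fin 3) (hᾱ₁ : ᾱ ≠ α) (hᾱ₂ : ᾱ ≠ 1) :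
    circParikh (x ++ [α, 1] ++ y ++ [1, α]) = circParikh (x ++ [1, α] ++ y ++ [α, 1]) ↔
      x.count ᾱ * (y.length + y.count 1 + 3) = y.count ᾱ * (x.length + x.count 1 + 3) := by
  have hd : (α = 0 ∧ ᾱ = 2) ∨ (α = 2 ∧ ᾱ = 0) := by
    rcases hα with rfl | rfl
    · left; exact ⟨rfl, by omega⟩
    · right; exact ⟨rfl, by omega⟩
  have hw : (x ++ [α, 1] ++ y ++ [1, α]) ≠ [] := by simp
  have hw' : (x ++ [1, α] ++ y ++ [α, 1]) ≠ [] := by simp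
  have hlen : (x ++ [α, 1] ++ y ++ [1, α]).length = x.length + y.length + 4 := by
    simp; omega
  have hlen' : (x ++ [1, α] ++ y ++ [α, 1]).length = x.length + y.length + 4 := by
    simp; omega
  rw [circParikh_eq_rot _ hw, circParikh_eq_rot _ hw', hlen, hlen']
  have hne : ((x.length + y.length + 4 : ℕ) : ℚ) ≠ 0 := by positivity
  have hcount : ∀ l : Fin 3, List.count l (x ++ [α, 1] ++ y ++ [1, α]) =
      List.count l (x ++ [1, α] ++ y ++ [α, 1]) := fun l => by
    simp only [List.count_append, List.count_cons, List.count_nil]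
    ring
  have hcrot : ∀ (l : Fin 3) (r : ℕ),
      (List.count l ((x ++ [α, 1] ++ y ++ [1, α]).rotate r) : ℚ) =
      (List.count l ((x ++ [1, α] ++ y ++ [α, 1]).rotate r) : ℚ) := fun l r => by
    rw [(List.rotate_perm _ r).count_eq, (List.rotate_perm _ r).count_eq, hcount l]
  have hkey : (∑ r ∈ Finset.range (x.length + y.length + 4),
        parikhMatrix ((x ++ [α, 1] ++ y ++ [1, α]).rotate r)) =
      (∑ r ∈ Finset.range (x.length + y.length + 4),
        parikhMatrix ((x ++ [1, α] ++ y ++ [α, 1]).rotate r)) ↔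
      (∑ r ∈ Finset.range (x.length + y.length + 4),
        (t3 ((x ++ [α, 1] ++ y ++ [1, α]).rotate r) : ℚ)) =
      (∑ r ∈ Finset.range (x.length + y.length + 4),
        (t3 ((x ++ [1, α] ++ y ++ [α, 1]).rotate r) : ℚ)) := by
    simp only [parikh_eq]
    rw [sum_pm2, sum_pm2, pm2_eq_iff]
    constructor
    · exact fun h => h.2.2.2.2.2.2
    · intro h
      refine ⟨rfl, ?_, ?_, ?_, sum_p_eq α ᾱ hd x y, sum_q_eq α ᾱ hd x y, h⟩ <;>
        exact Finset.sum_congr rfl fun r _ => hcrot _ r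
  have hQiff : (∑ r ∈ Finset.range (x.length + y.length + 4),
        (t3 ((x ++ [α, 1] ++ y ++ [1, α]).rotate r) : ℚ)) =
      (∑ r ∈ Finset.range (x.length + y.length + 4),
        (t3 ((x ++ [1, α] ++ y ++ [α, 1]).rotate r) : ℚ)) ↔
      x.count ᾱ * (y.length + y.count 1 + 3) = y.count ᾱ * (x.length + x.count 1 + 3) := by
    have hst := sum_t_rel α ᾱ hd x y
    constructor
    · intro h
      have hQ : (x.count ᾱ : ℚ) * ((y.length : ℚ) + (y.count 1 : ℚ) + 3) =
          (y.count ᾱ : ℚ) * ((x.length : ℚ) + (x.count 1 : ℚ) + 3) := by linarith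
      exact_mod_cast hQ
    · intro h
      have hQ : (x.count ᾱ : ℚ) * ((y.length : ℚ) + (y.count 1 : ℚ) + 3) =
          (y.count ᾱ : ℚ) * ((x.length : ℚ) + (x.count 1 : ℚ) + 3) := by
        exact_mod_cast h
      linarith
  have hne2 : ((x.length : ℚ) + (y.length : ℚ) + 4) ≠ 0 := by positivity
  constructor
  · intro h
    have h2 := congrArg (fun X => ((x.length + y.length + 4 : ℕ) : ℚ) • X) h
    have h3 : (∑ r ∈ Finset.range (x.length + y.length + 4),
          parikhMatrix ((x ++ [α, 1] ++ y ++ [1, α]).rotate r)) =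
        (∑ r ∈ Finset.range (x.length + y.length + 4),
          parikhMatrix ((x ++ [1, α] ++ y ++ [α, 1]).rotate r)) := by
      simpa [smul_smul, mul_inv_cancel₀ hne2] using h2
    exact hQiff.mp (hkey.mp h3)
  · intro h
    rw [hkey.mpr (hQiff.mpr h)]
end
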